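/- arXiv:2401.02934 — 3 statements merged into one kernel-verified Lean document; each statement's English description precedes it below -/
import Mathlib

section
/- Let G be a group and X ⊆ G a symmetric subset (closed under inverses) containing the identity. Suppose there exist elements g₁, ..., g_k ∈ G such that G is covered by the k left translates g₁X, ..., g_kX. Then every element of the subgroup generated by X is a product of at most 3k−2 elements of X, i.e. X^(3k−2) = ⟨X⟩. -/
open Pointwise

private lemma pow_subset_closure' {G : Type*} [Group G] (X : Set G) :
    ∀ n : ℕ, X ^ n ⊆ (Subgroup.closure X : Set G) := by
  intro n
  induction n with
  | zero =>
    intro x hx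
    rw [pow_zero] at hx
    rw [Set.mem_one] at hx
    subst hx
    exact Subgroup.one_mem _
  | succ n ih =>
    rw [pow_succ]
    rintro x ⟨a, ha, b, hb, rfl⟩
    exact Subgroup.mul_mem _ (ih ha) (Subgroup.subset_closure hb)

/-- Covering lemma: if a symmetric set `X` containing `1` has `k` left translates
covering `G`, then `X ^ (3 * k - 2)` equals the subgroup generated by `X`. -/
theorem stmt0 {G : Type*} [Group G] (X : Set G) (hsym : X⁻¹ = X) (hone : (1 : G) ∈ X)
    (k : ℕ) (g : Fin k → G) (hcov : ∀ x : G, ∃ i : Fin k, x ∈ g i • X) :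
    X ^ (3 * k - 2) = (Subgroup.closure X : Set G) := by
  classical
  obtain ⟨i0, -⟩ := hcov 1
  have hk : 1 ≤ k := i0.pos
  -- normalize the translates so that one of them is the identity
  set g' : Fin k → G := fun i => (g i0)⁻¹ * g i with hg'
  have hcov' : ∀ x : G, ∃ i : Fin k, x ∈ g' i • X := by
    intro x
    obtain ⟨i, hi⟩ := hcov (g i0 * x)
    refine ⟨i, ?_⟩
    rw [Set.mem_smul_set] at hi ⊢
    obtain ⟨y, hy, hxy⟩ := hi
    refine ⟨y, hy, ?_⟩
    simp only [hg', smul_eq_mul, mul_assoc] at hxy ⊢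
    rw [hxy]
    group
  have hg'i0 : g' i0 = 1 := by simp [hg']
  -- monotone family of index sets
  set S : ℕ → Finset (Fin k) := fun m => Finset.univ.filter (fun i => g' i ∈ X ^ m) with hS
  have hmono : ∀ {m n : ℕ}, m ≤ n → S m ⊆ S n := by
    intro m n hmn i hi
    simp only [hS, Finset.mem_filter, Finset.mem_univ, true_and] at hi ⊢
    exact Set.pow_subset_pow_right hone hmn hi
  have hinv : ∀ {y : G}, y ∈ X → y⁻¹ ∈ X := by
    intro y hy
    rw [← hsym]
    exact Set.inv_mem_inv.2 hy
  -- Key 1 : X^r is covered by translates indexed by S (r+1)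
  have key1 : ∀ r : ℕ, ∀ x ∈ X ^ r, ∃ i ∈ S (r + 1), x ∈ g' i • X := by
    intro r x hx
    obtain ⟨i, hi⟩ := hcov' x
    refine ⟨i, ?_, hi⟩
    rw [Set.mem_smul_set] at hi
    obtain ⟨y, hy, hxy⟩ := hi
    simp only [hS, Finset.mem_filter, Finset.mem_univ, true_and]
    rw [smul_eq_mul] at hxy
    have : g' i = x * y⁻¹ := by rw [← hxy]; group
    rw [this, pow_succ]
    exact Set.mul_mem_mul hx (hinv hy)
  -- Key 2 : translates indexed by S m lie in X^(m+1)
  have key2 : ∀ m : ℕ, ∀ i ∈ S m, g' i • X ⊆ X ^ (m + 1) := by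
    intro m i hi x hx
    simp only [hS, Finset.mem_filter, Finset.mem_univ, true_and] at hi
    rw [Set.mem_smul_set] at hx
    obtain ⟨y, hy, hxy⟩ := hx
    rw [← hxy, pow_succ]
    exact Set.mul_mem_mul hi hy
  -- pigeonhole : the chain S 0 ⊆ S 3 ⊆ ... stabilizes at some j < k
  have hpig : ∃ j : ℕ, j < k ∧ S (3 * j + 3) ⊆ S (3 * j) := by
    by_contra hcon
    push_neg at hcon
    have hgrow : ∀ j : ℕ, j ≤ k → j + 1 ≤ (S (3 * j)).card := by
      intro j
      induction j with
      | zero =>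
        intro _
        have : i0 ∈ S 0 := by
          simp only [hS, Finset.mem_filter, Finset.mem_univ, true_and]
          rw [hg'i0, pow_zero]
          exact Set.mem_one.2 rfl
        exact Finset.card_pos.2 ⟨i0, this⟩
      | succ j ih =>
        intro hj
        have hjk : j < k := by omega
        have h1 := ih (le_of_lt hjk)
        have h2 : S (3 * j) ⊂ S (3 * j + 3) :=
          ⟨hmono (by omega), fun h => hcon j hjk h⟩
        have h3 : (S (3 * j)).card < (S (3 * j + 3)).card := Finset.card_lt_card h2
        have : 3 * j + 3 = 3 * (j + 1) := by ring
        rw [this] at h3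
        omega
    have := hgrow k le_rfl
    have hle : (S (3 * k)).card ≤ k := by
      have h1 : (S (3 * k)).card ≤ Fintype.card (Fin k) := Finset.card_le_univ _
      simpa using h1
    omega
  obtain ⟨j, hjk, hstab⟩ := hpig
  set m : ℕ := 3 * j with hm
  -- stabilization : X^(m+2) ⊆ X^(m+1)
  have hstep : X ^ (m + 2) ⊆ X ^ (m + 1) := by
    intro x hx
    obtain ⟨i, hi, hxi⟩ := key1 (m + 2) x hx
    have hi' : i ∈ S m := hstab hi
    exact key2 m i hi' hxi
  -- all higher powers collapse to X^(m+1)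
  have hcollapse : ∀ r : ℕ, X ^ (m + 1 + r) = X ^ (m + 1) := by
    intro r
    induction r with
    | zero => rfl
    | succ r ih =>
      apply Set.Subset.antisymm
      · have : m + 1 + (r + 1) = (m + 1 + r) + 1 := by omega
        rw [this, pow_succ, ih, ← pow_succ]
        exact hstep
      · exact Set.pow_subset_pow_right hone (Nat.le_add_right _ _)
  -- X^(m+1) is a subgroup
  have hXsub : X ⊆ X ^ (m + 1) := by
    intro a ha
    have h1 : a ∈ X ^ 1 := by rwa [pow_one]
    exact Set.pow_subset_pow_right hone (Nat.le_add_left 1 m) h1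
  let H : Subgroup G :=
    { carrier := X ^ (m + 1)
      one_mem' := hXsub hone
      mul_mem' := by
        intro a b ha hb
        have : X ^ (m + 1) * X ^ (m + 1) = X ^ (m + 1) := by
          rw [← pow_add]
          exact hcollapse (m + 1)
        rw [← this]
        exact Set.mul_mem_mul ha hb
      inv_mem' := by
        intro a ha
        have h1 : (X ^ (m + 1))⁻¹ = X ^ (m + 1) := by
          rw [← inv_pow, hsym]
        have h2 : a⁻¹ ∈ (X ^ (m + 1))⁻¹ := Set.inv_mem_inv.2 ha
        rw [h1] at h2
        exact h2 }
  have hclosure : (Subgroup.closure X : Set G) ⊆ X ^ (m + 1) :=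
    (Subgroup.closure_le H).2 hXsub
  have hmle : m + 1 ≤ 3 * k - 2 := by omega
  apply Set.Subset.antisymm
  · exact pow_subset_closure' X _
  · exact hclosure.trans (Set.pow_subset_pow_right hone hmle)
end

section
/- Let R be a Dedekind domain (or more specifically a localisation of the ring of integers of a number field) such that no quotient of R by a maximal ideal is isomorphic to the field with two elements. Then there exist elements t₁, t₂ ∈ R such that t₁² + t₁ and t₂² + t₂ generate the unit ideal of R. -/
/-- In a finite field not isomorphic to `ZMod 2`, there is an element `≠ 0, -1`. -/
lemma aux_exists {F : Type*} [CommRing F] [Nontrivial F] [Finite F] (h2 : ¬ Nonempty (F ≃+* ZMod 2)) :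
    ∃ x : F, x ≠ 0 ∧ x ≠ -1 := by
  by_contra h
  push_neg at h
  have hsurj : Function.Surjective (fun b : Bool => if b then (0 : F) else -1) := by
    intro x
    by_cases h0 : x = 0
    · exact ⟨true, by simp [h0]⟩
    · exact ⟨false, by simp [h x h0]⟩
  have := Fintype.ofFinite F
  have hle : Fintype.card F ≤ 2 := by
    simpa using Fintype.card_le_of_surjective _ hsurj
  have hge : 2 ≤ Fintype.card F := Fintype.one_lt_card
  have hcard : Fintype.card F = 2 := le_antisymm hle hge
  exact h2 ⟨(ZMod.ringEquivOfPrime F Nat.prime_two hcard).symm⟩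

/-- In a Dedekind domain (not a field) with all residue fields finite and none
isomorphic to `𝔽₂`, there are `t₁`, `t₂` with `t₁² + t₁` and `t₂² + t₂`
generating the unit ideal. -/
theorem stmt2 {R : Type*} [CommRing R] [IsDomain R] [IsDedekindDomain R]
    (hnf : ¬ IsField R)
    (hfin : ∀ 𝔪 : Ideal R, 𝔪.IsMaximal → Finite (R ⧸ 𝔪))
    (hF2 : ∀ 𝔪 : Ideal R, 𝔪.IsMaximal → ¬ Nonempty ((R ⧸ 𝔪) ≃+* ZMod 2)) :
    ∃ t₁ t₂ : R, Ideal.span {t₁ ^ 2 + t₁, t₂ ^ 2 + t₂} = ⊤ := by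
  obtain ⟨a, ha0, hau⟩ := Ring.exists_not_isUnit_of_not_isField hnf
  have ha1 : a + 1 ≠ 0 := by
    intro h
    exact hau (by rw [show a = -1 by linear_combination h]; exact isUnit_one.neg)
  have hs1 : a ^ 2 + a ≠ 0 := by
    intro h
    rcases mul_eq_zero.mp (show a * (a + 1) = 0 by ring_nf; linear_combination h) with h | h
    · exact ha0 h
    · exact ha1 h
  have hspan : Ideal.span {a ^ 2 + a} ≠ 0 := by
    simpa [Ideal.span_singleton_eq_bot] using hs1
  have hSfin : {𝔪 : Ideal R | 𝔪.IsMaximal ∧ a ^ 2 + a ∈ 𝔪}.Finite := by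
    refine ((Ideal.finite_factors hspan).image
      (fun v => v.asIdeal)).subset ?_
    rintro 𝔪 ⟨hmax, hmem⟩
    refine ⟨⟨𝔪, hmax.isPrime, Ring.ne_bot_of_isMaximal_of_not_isField hmax hnf⟩, ?_, rfl⟩
    simp only [Set.mem_setOf_eq, Ideal.dvd_iff_le, Ideal.span_singleton_le_iff_mem]
    exact hmem
  set F := hSfin.toFinset with hF
  have hmaxF : ∀ 𝔪 ∈ F, (𝔪 : Ideal R).IsMaximal := by
    intro 𝔪 hm
    exact (hSfin.mem_toFinset.mp hm).1
  have hc : ∀ 𝔪 ∈ F, ∃ c : R, c ∉ 𝔪 ∧ c + 1 ∉ 𝔪 := by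
    intro 𝔪 hm
    have hmax := hmaxF 𝔪 hm
    haveI := Ideal.Quotient.nontrivial_iff.mpr hmax.ne_top
    haveI := hfin 𝔪 hmax
    obtain ⟨x, hx0, hx1⟩ := aux_exists (F := R ⧸ 𝔪) (hF2 𝔪 hmax)
    obtain ⟨c, rfl⟩ := Ideal.Quotient.mk_surjective x
    refine ⟨c, ?_, ?_⟩
    · intro h
      exact hx0 ((Ideal.Quotient.eq_zero_iff_mem).mpr h)
    · intro h
      apply hx1
      have : Ideal.Quotient.mk 𝔪 (c + 1) = 0 := (Ideal.Quotient.eq_zero_iff_mem).mpr h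
      rw [map_add, map_one] at this
      linear_combination this
  choose c hc1 hc2 using hc
  obtain ⟨y, hy⟩ := IsDedekindDomain.exists_forall_sub_mem_ideal (s := F) (fun 𝔪 => 𝔪)
    (fun _ => 1)
    (fun 𝔪 hm => Ideal.prime_of_isPrime
      (Ring.ne_bot_of_isMaximal_of_not_isField (hmaxF 𝔪 hm) hnf) (hmaxF 𝔪 hm).isPrime)
    (fun i _ j _ h => h)
    (fun i => c i.1 i.2)
  refine ⟨a, y, ?_⟩
  by_contra hne
  obtain ⟨𝔪, hmax, hle⟩ := Ideal.exists_le_maximal _ hne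
  have hmem1 : a ^ 2 + a ∈ 𝔪 := hle (Ideal.subset_span (by simp))
  have hmem2 : y ^ 2 + y ∈ 𝔪 := hle (Ideal.subset_span (by simp))
  have hmF : 𝔪 ∈ F := hSfin.mem_toFinset.mpr ⟨hmax, hmem1⟩
  have hysub : y - c 𝔪 hmF ∈ 𝔪 := by simpa using hy 𝔪 hmF
  have : y * (y + 1) ∈ 𝔪 := by
    have : y ^ 2 + y = y * (y + 1) := by ring
    rwa [this] at hmem2
  rcases (hmax.isPrime.mem_or_mem this) with h | h
  · exact hc1 𝔪 hmF (by simpa using 𝔪.sub_mem h hysub)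
  · refine hc2 𝔪 hmF ?_
    have := 𝔪.sub_mem h hysub
    have heq : y + 1 - (y - c 𝔪 hmF) = c 𝔪 hmF + 1 := by ring
    rwa [heq] at this
end

section
/- Let (G_i)_{i∈ι} be a family of groups and G = ∏_i G_i their direct product. Let w be a word (an element of a free group on k generators). If for every i the width of w in G_i is at most C (i.e. ⟨w(G_i)⟩ = w(G_i)^C, where w(G_i) is the symmetric set of w-values), then the width of w in G is at most 2C. -/
open Pointwise

/-- The symmetric set of `w`-values in a group `H`. -/
def wordValues {kk : ℕ} (w : FreeGroup (Fin kk)) (H : Type*) [Group H] : Set H :=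
  {x | ∃ h : Fin kk → H, FreeGroup.lift h w = x ∨ FreeGroup.lift h w = x⁻¹}

/-- The set of positive `w`-values. -/
def posVals {kk : ℕ} (w : FreeGroup (Fin kk)) (H : Type*) [Group H] : Set H :=
  Set.range fun h : Fin kk → H => FreeGroup.lift h w

section Aux

variable {kk : ℕ} {w : FreeGroup (Fin kk)} {H : Type*} [Group H]

lemma one_mem_posVals : (1 : H) ∈ posVals w H := by
  refine ⟨fun _ => 1, ?_⟩
  show FreeGroup.lift (fun _ : Fin kk => (1 : H)) w = 1
  have : (FreeGroup.lift (fun _ : Fin kk => (1 : H))) = (1 : FreeGroup (Fin kk) →* H) := by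
    apply FreeGroup.ext_hom; intro x; simp
  rw [this]; rfl

lemma conj_mem_posVals (g : H) {x : H} (hx : x ∈ posVals w H) :
    g * x * g⁻¹ ∈ posVals w H := by
  obtain ⟨h, rfl⟩ := hx
  refine ⟨fun j => g * h j * g⁻¹, ?_⟩
  show FreeGroup.lift (fun j => g * h j * g⁻¹) w = g * FreeGroup.lift h w * g⁻¹
  have : (FreeGroup.lift (fun j => g * h j * g⁻¹)) =
      ((MulAut.conj g).toMonoidHom.comp (FreeGroup.lift h)) := by
    apply FreeGroup.ext_hom; intro x; simp
  rw [this]; simp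

lemma posVals_subset_wordValues : posVals w H ⊆ wordValues w H := by
  rintro x ⟨h, rfl⟩; exact ⟨h, Or.inl rfl⟩

lemma inv_posVals_subset_wordValues : (posVals w H)⁻¹ ⊆ wordValues w H := by
  rintro x hx
  obtain ⟨h, hh⟩ := Set.mem_inv.mp hx
  exact ⟨h, Or.inr hh⟩

lemma pow_subset_pow_succ {S : Set H} (hS : (1:H) ∈ S) (n : ℕ) : S ^ n ⊆ S ^ (n + 1) := by
  intro a ha
  rw [pow_succ]
  simpa using Set.mul_mem_mul ha hS

lemma pow_subset_pow_of_subset {S T : Set H} (h : S ⊆ T) (n : ℕ) : S ^ n ⊆ T ^ n := by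
  induction n with
  | zero => simp
  | succ n ih =>
    rw [pow_succ, pow_succ]
    exact Set.mul_subset_mul ih h

lemma pow_subset_subgroup {S : Set H} {K : Subgroup H} (h : S ⊆ K) (n : ℕ) :
    S ^ n ⊆ (K : Set H) := by
  induction n with
  | zero => simpa using one_mem K
  | succ n ih =>
    rw [pow_succ]
    rintro x hx
    obtain ⟨y, hy, z, hz, rfl⟩ := Set.mem_mul.mp hx
    exact mul_mem (ih hy) (h hz)

/-- Key reordering lemma: a product of `C` symmetric values is a product of `C`
positive values followed by `C` inverse values. -/
lemma wv_pow_subset (C : ℕ) :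
    (wordValues w H) ^ C ⊆ (posVals w H) ^ C * ((posVals w H)⁻¹) ^ C := by
  induction C with
  | zero => simp
  | succ C ih =>
    intro x hx
    rw [pow_succ] at hx
    obtain ⟨y, hy, s, hs, rfl⟩ := Set.mem_mul.mp hx
    obtain ⟨p, hp, q, hq, rfl⟩ := Set.mem_mul.mp (ih hy)
    obtain ⟨h, hcase | hcase⟩ := hs
    · -- s is a positive value
      have hconj : q * s * q⁻¹ ∈ posVals w H := conj_mem_posVals q ⟨h, hcase⟩
      have : p * q * s = (p * (q * s * q⁻¹)) * q := by group
      rw [this]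
      refine Set.mul_mem_mul ?_ (pow_subset_pow_succ (by simpa using one_mem_posVals) C hq)
      rw [pow_succ]
      exact Set.mul_mem_mul hp hconj
    · -- s is an inverse value
      have hsN : s ∈ (posVals w H)⁻¹ := Set.mem_inv.mpr ⟨h, hcase⟩
      have : p * q * s = p * (q * s) := by group
      rw [this]
      refine Set.mul_mem_mul (pow_subset_pow_succ one_mem_posVals C hp) ?_
      rw [pow_succ]
      exact Set.mul_mem_mul hq hsN

end Aux

section Pi

variable {ι : Type*} {G : ι → Type*} [∀ i, Group (G i)] {kk : ℕ} {w : FreeGroup (Fin kk)}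

lemma lift_apply_pi (h : Fin kk → ∀ i, G i) (i : ι) :
    FreeGroup.lift h w i = FreeGroup.lift (fun j => h j i) w := by
  have : (Pi.evalMonoidHom G i).comp (FreeGroup.lift h) =
      FreeGroup.lift (fun j => h j i) := by
    apply FreeGroup.ext_hom; intro x; simp
  exact (DFunLike.congr_fun this w :)

lemma mem_posVals_pi {f : ∀ i, G i} (hf : ∀ i, f i ∈ posVals w (G i)) :
    f ∈ posVals w (∀ i, G i) := by
  choose h hh using hf
  refine ⟨fun j i => h i j, funext fun i => ?_⟩
  show FreeGroup.lift (fun j i => h i j) w i = f i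
  rw [lift_apply_pi]; exact hh i

lemma mem_posVals_pow_pi (n : ℕ) {f : ∀ i, G i} (hf : ∀ i, f i ∈ (posVals w (G i)) ^ n) :
    f ∈ (posVals w (∀ i, G i)) ^ n := by
  induction n generalizing f with
  | zero =>
    simp only [pow_zero, Set.mem_one] at hf ⊢
    exact funext hf
  | succ n ih =>
    simp only [pow_succ] at hf ⊢
    have : ∀ i, ∃ u ∈ (posVals w (G i)) ^ n, ∃ v ∈ posVals w (G i), u * v = f i := by
      intro i; exact Set.mem_mul.mp (hf i)
    choose u hu v hv huv using this
    have : f = (fun i => u i) * (fun i => v i) := funext fun i => (huv i).symm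
    rw [this]
    exact Set.mul_mem_mul (ih hu) (mem_posVals_pi hv)

end Pi

/-- If a word `w` has width at most `C` in every group `G i`, then it has width at
most `2 * C` in the direct product `Π i, G i`. -/
theorem stmt4 {ι : Type*} (G : ι → Type*) [∀ i, Group (G i)] {kk : ℕ}
    (w : FreeGroup (Fin kk)) (C : ℕ)
    (hwidth : ∀ i, (wordValues w (G i)) ^ C = (Subgroup.closure (wordValues w (G i)) : Set (G i))) :
    (wordValues w (∀ i, G i)) ^ (2 * C) =
      (Subgroup.closure (wordValues w (∀ i, G i)) : Set (∀ i, G i)) := by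
  apply Set.Subset.antisymm
  · exact pow_subset_subgroup Subgroup.subset_closure _
  · intro x hx
    -- each component lies in the closure of componentwise word values
    have hpi : ∀ i, x i ∈ Subgroup.closure (wordValues w (G i)) := by
      have hle : Subgroup.closure (wordValues w (∀ i, G i)) ≤
          Subgroup.pi Set.univ (fun i => Subgroup.closure (wordValues w (G i))) := by
        apply Subgroup.closure_le _ |>.mpr
        rintro y ⟨h, hcase | hcase⟩ <;>
        · intro i _
          apply Subgroup.subset_closure
          refine ⟨fun j => h j i, ?_⟩
          rw [← lift_apply_pi, hcase]
          first
          | exact Or.inl rfl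
          | exact Or.inr (by simp)
      intro i
      exact hle hx i (Set.mem_univ i)
    have hcomp : ∀ i, x i ∈ (posVals w (G i)) ^ C * ((posVals w (G i))⁻¹) ^ C := by
      intro i
      exact wv_pow_subset C (by rw [hwidth i]; exact hpi i)
    have : ∀ i, ∃ p ∈ (posVals w (G i)) ^ C, ∃ q ∈ ((posVals w (G i))⁻¹) ^ C, p * q = x i :=
      fun i => Set.mem_mul.mp (hcomp i)
    choose p hp q hq hpq using this
    have hxeq : x = (fun i => p i) * (fun i => q i) := funext fun i => (hpq i).symm
    have hP : (fun i => p i) ∈ (posVals w (∀ i, G i)) ^ C := mem_posVals_pow_pi C hp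
    have hQ : (fun i => q i) ∈ ((posVals w (∀ i, G i))⁻¹) ^ C := by
      rw [inv_pow]
      rw [Set.mem_inv]
      apply mem_posVals_pow_pi C
      intro i
      have := hq i
      rw [inv_pow, Set.mem_inv] at this
      simpa using this
    rw [hxeq, two_mul, pow_add]
    exact Set.mul_mem_mul
      (pow_subset_pow_of_subset posVals_subset_wordValues C hP)
      (pow_subset_pow_of_subset inv_posVals_subset_wordValues C hQ)
end
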